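/- Let P be an n×m matrix with nonnegative real entries summing to 1, let λ_1,…,λ_r be positive reals, and suppose P admits a diagonal form of PSD factorization with respect to Λ = diag(√λ_1,…,√λ_r), i.e., there exist r×r positive semidefinite complex matrices C_1,…,C_n and D_1,…,D_m with tr(C_x D_y) = P(x,y) for all x,y and ∑_{x=1}^n C_x = ∑_{y=1}^m D_y = Λ. Then ∑_{i=1}^n ∑_{j=1}^n ( ∑_{y=1}^m √(P(i,y))·√(P(j,y)) )² ≥ ∑_{k=1}^r λ_k². -/

import Mathlib

open Matrix
open scoped ComplexOrder

open scoped MatrixOrder in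
noncomputable def Matrix.PosSemidef.sqrt {r : ℕ} {A : Matrix (Fin r) (Fin r) ℂ}
    (_ : A.PosSemidef) : Matrix (Fin r) (Fin r) ℂ := CFC.sqrt A

open scoped MatrixOrder in
lemma Matrix.PosSemidef.posSemidef_sqrt {r : ℕ} {A : Matrix (Fin r) (Fin r) ℂ}
    (hA : A.PosSemidef) : hA.sqrt.PosSemidef := (CFC.sqrt_nonneg A).posSemidef

open scoped MatrixOrder in
lemma Matrix.PosSemidef.sqrt_mul_self {r : ℕ} {A : Matrix (Fin r) (Fin r) ℂ}
    (hA : A.PosSemidef) : hA.sqrt * hA.sqrt = A := CFC.sqrt_mul_sqrt_self A hA.nonneg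

namespace SchmidtAux

attribute [local instance] Matrix.frobeniusSeminormedAddCommGroup Matrix.frobeniusNormedRing

variable {r : ℕ}

lemma fnorm_eq_sqrt (X : Matrix (Fin r) (Fin r) ℂ) :
    ‖X‖ = Real.sqrt (∑ i, ∑ j, ‖X i j‖ ^ 2) := by
  rw [Matrix.frobenius_norm_def, Real.sqrt_eq_rpow]
  congr 1
  refine Finset.sum_congr rfl fun i _ => Finset.sum_congr rfl fun j _ => ?_
  rw [show (2:ℝ) = ((2:ℕ):ℝ) by norm_num, Real.rpow_natCast]

lemma norm_sq_eq_retrace (X : Matrix (Fin r) (Fin r) ℂ) :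
    ‖X‖ ^ 2 = (Matrix.trace (Xᴴ * X)).re := by
  rw [fnorm_eq_sqrt, Real.sq_sqrt (by positivity)]
  have h : Matrix.trace (Xᴴ * X) = ∑ j, ∑ i, (starRingEnd ℂ) (X i j) * X i j := by
    simp [Matrix.trace, Matrix.mul_apply, Matrix.conjTranspose_apply, Matrix.diag]
  rw [h, Complex.re_sum, Finset.sum_comm]
  refine Finset.sum_congr rfl fun i _ => ?_
  rw [Complex.re_sum]
  refine Finset.sum_congr rfl fun j _ => ?_
  rw [mul_comm, Complex.mul_conj]
  simp [Complex.normSq_eq_norm_sq, ← Complex.ofReal_pow]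

lemma abs_trace_cs (X Y : Matrix (Fin r) (Fin r) ℂ) :
    ‖Matrix.trace (Xᴴ * Y)‖ ≤ ‖X‖ * ‖Y‖ := by
  have h : Matrix.trace (Xᴴ * Y)
      = ∑ p : Fin r × Fin r, (starRingEnd ℂ) (X p.2 p.1) * Y p.2 p.1 := by
    rw [← Finset.univ_product_univ, Finset.sum_product]
    simp [Matrix.trace, Matrix.mul_apply, Matrix.conjTranspose_apply, Matrix.diag]
  rw [h]
  calc ‖∑ p : Fin r × Fin r, (starRingEnd ℂ) (X p.2 p.1) * Y p.2 p.1‖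
      ≤ ∑ p : Fin r × Fin r, ‖X p.2 p.1‖ * ‖Y p.2 p.1‖ := by
        refine (norm_sum_le _ _).trans (le_of_eq ?_)
        refine Finset.sum_congr rfl fun p _ => ?_
        rw [norm_mul, RCLike.norm_conj]
    _ ≤ Real.sqrt (∑ p : Fin r × Fin r, ‖X p.2 p.1‖ ^ 2)
        * Real.sqrt (∑ p : Fin r × Fin r, ‖Y p.2 p.1‖ ^ 2) :=
        Real.sum_mul_le_sqrt_mul_sqrt _ _ _
    _ = ‖X‖ * ‖Y‖ := by
        rw [fnorm_eq_sqrt, fnorm_eq_sqrt, ← Finset.univ_product_univ,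
          Finset.sum_product, Finset.sum_product]
        rw [Finset.sum_comm (f := fun a b => ‖X b a‖ ^ 2),
          Finset.sum_comm (f := fun a b => ‖Y b a‖ ^ 2)]

lemma norm_sqrt_mul_sqrt {A U : Matrix (Fin r) (Fin r) ℂ}
    (hA : A.PosSemidef) (hU : U.PosSemidef) {p : ℝ}
    (hp : Matrix.trace (A * U) = (p : ℂ)) :
    ‖hU.sqrt * hA.sqrt‖ = Real.sqrt p := by
  set a := hA.sqrt with ha
  set u := hU.sqrt with hu
  have h2 : ‖u * a‖ ^ 2 = p := by
    rw [norm_sq_eq_retrace]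
    have he : (u * a)ᴴ = a * u := by
      rw [Matrix.conjTranspose_mul, hA.posSemidef_sqrt.1, hU.posSemidef_sqrt.1]
    rw [he]
    have : a * u * (u * a) = a * (u * u * a) := by
      simp only [Matrix.mul_assoc]
    rw [this, hU.sqrt_mul_self, Matrix.trace_mul_comm, Matrix.mul_assoc,
      hA.sqrt_mul_self, Matrix.trace_mul_comm, hp, Complex.ofReal_re]
  rw [← Real.sqrt_sq (norm_nonneg (u * a)), h2]

lemma key {A B U V : Matrix (Fin r) (Fin r) ℂ}
    (hA : A.PosSemidef) (hB : B.PosSemidef) (hU : U.PosSemidef) (hV : V.PosSemidef)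
    {pau pav pbu pbv : ℝ}
    (hau : Matrix.trace (A * U) = (pau : ℂ)) (hav : Matrix.trace (A * V) = (pav : ℂ))
    (hbu : Matrix.trace (B * U) = (pbu : ℂ)) (hbv : Matrix.trace (B * V) = (pbv : ℂ)) :
    ‖Matrix.trace (A * U * B * V)‖ ≤
      (Real.sqrt pau * Real.sqrt pbu) * (Real.sqrt pav * Real.sqrt pbv) := by
  set a := hA.sqrt
  set b := hB.sqrt
  set u := hU.sqrt
  set v := hV.sqrt
  have hah : aᴴ = a := hA.posSemidef_sqrt.1
  have huh : uᴴ = u := hU.posSemidef_sqrt.1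
  have hvh : vᴴ = v := hV.posSemidef_sqrt.1
  have htrm : Matrix.trace (A * U * B * V) = Matrix.trace ((u * A * v)ᴴ * (u * B * v)) := by
    have he : (u * A * v)ᴴ = v * (A * u) := by
      rw [Matrix.conjTranspose_mul, Matrix.conjTranspose_mul, hA.1, huh, hvh]
    rw [he]
    have h1 : v * (A * u) * (u * B * v) = v * (A * (u * u) * B * v) := by
      simp only [Matrix.mul_assoc]
    rw [h1, hU.sqrt_mul_self, Matrix.trace_mul_comm v (A * U * B * v),
      Matrix.mul_assoc (A * U * B) v v, hV.sqrt_mul_self]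
  rw [htrm]
  have hsub : ∀ (W : Matrix (Fin r) (Fin r) ℂ) (hW : W.PosSemidef) (pu pv : ℝ),
      Matrix.trace (W * U) = (pu : ℂ) → Matrix.trace (W * V) = (pv : ℂ) →
      ‖u * W * v‖ ≤ Real.sqrt pu * Real.sqrt pv := by
    intro W hW pu pv h1 h2
    have hws : u * W * v = (u * hW.sqrt) * (hW.sqrt * v) := by
      conv_lhs => rw [← hW.sqrt_mul_self]
      simp only [Matrix.mul_assoc]
    rw [hws]
    refine (norm_mul_le _ _).trans ?_
    have e1 : ‖u * hW.sqrt‖ = Real.sqrt pu := norm_sqrt_mul_sqrt hW hU h1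
    have e2 : ‖hW.sqrt * v‖ = Real.sqrt pv := by
      have : hW.sqrt * v = ((v * hW.sqrt)ᴴ) := by
        rw [Matrix.conjTranspose_mul, hW.posSemidef_sqrt.1, hvh]
      rw [this, Matrix.frobenius_norm_conjTranspose]
      exact norm_sqrt_mul_sqrt hW hV h2
    rw [e1, e2]
  calc ‖Matrix.trace ((u * A * v)ᴴ * (u * B * v))‖
      ≤ ‖u * A * v‖ * ‖u * B * v‖ := abs_trace_cs _ _
    _ ≤ (Real.sqrt pau * Real.sqrt pav) * (Real.sqrt pbu * Real.sqrt pbv) := by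
        refine mul_le_mul (hsub A hA _ _ hau hav) (hsub B hB _ _ hbu hbv) (norm_nonneg _) ?_
        positivity
    _ = (Real.sqrt pau * Real.sqrt pbu) * (Real.sqrt pav * Real.sqrt pbv) := by ring

end SchmidtAux

/-- If `P` (a probability matrix) admits a diagonal form of PSD factorization
with respect to `Λ = diagonal (√λ₁, …, √λᵣ)`, then
`∑ᵢ ∑ⱼ F(Pᵢ, Pⱼ)² ≥ ∑ₖ λₖ²`, where `F(Pᵢ, Pⱼ) = ∑_y √(P(i,y))·√(P(j,y))`. -/
theorem sum_fidelity_squares_ge_sum_squares_schmidt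
    (n m r : ℕ) (P : Matrix (Fin n) (Fin m) ℝ)
    (hP : ∀ x y, 0 ≤ P x y) (hPsum : ∑ x, ∑ y, P x y = 1)
    (l : Fin r → ℝ) (hl : ∀ i, 0 < l i)
    (C : Fin n → Matrix (Fin r) (Fin r) ℂ) (D : Fin m → Matrix (Fin r) (Fin r) ℂ)
    (hC : ∀ x, (C x).PosSemidef) (hD : ∀ y, (D y).PosSemidef)
    (htr : ∀ x y, (C x * D y).trace = (P x y : ℂ))
    (hCsum : (∑ x, C x) = Matrix.diagonal (fun i => (Real.sqrt (l i) : ℂ)))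
    (hDsum : (∑ y, D y) = Matrix.diagonal (fun i => (Real.sqrt (l i) : ℂ))) :
    ∑ k, (l k) ^ 2 ≤
      ∑ i, ∑ j, (∑ y, Real.sqrt (P i y) * Real.sqrt (P j y)) ^ 2 := by
  classical
  set Λ : Matrix (Fin r) (Fin r) ℂ := Matrix.diagonal (fun i => (Real.sqrt (l i) : ℂ)) with hΛ
  have h1 : ((Λ * Λ * Λ * Λ).trace).re = ∑ k, l k ^ 2 := by
    rw [hΛ]
    simp only [Matrix.diagonal_mul_diagonal, Matrix.trace_diagonal]
    rw [Complex.re_sum]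
    refine Finset.sum_congr rfl fun k _ => ?_
    rw [← Complex.ofReal_mul, ← Complex.ofReal_mul, ← Complex.ofReal_mul, Complex.ofReal_re]
    have hs := Real.mul_self_sqrt (hl k).le
    linear_combination (Real.sqrt (l k) * Real.sqrt (l k) + l k) * hs
  have h2 : (Λ * Λ * Λ * Λ).trace
      = ∑ z, ∑ j, ∑ y, ∑ i, (C i * D y * C j * D z).trace := by
    nth_rewrite 1 [← hCsum]
    nth_rewrite 1 [← hDsum]
    nth_rewrite 1 [← hCsum]
    nth_rewrite 1 [← hDsum]
    simp only [Finset.sum_mul, Finset.mul_sum, Matrix.trace_sum]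
  have key4 : ∀ (i j : Fin n) (y z : Fin m),
      ‖(C i * D y * C j * D z).trace‖ ≤
        (Real.sqrt (P i y) * Real.sqrt (P j y)) * (Real.sqrt (P i z) * Real.sqrt (P j z)) :=
    fun i j y z => SchmidtAux.key (hC i) (hC j) (hD y) (hD z)
      (htr i y) (htr i z) (htr j y) (htr j z)
  have reorder : ∀ (g : Fin n → Fin m → Fin n → Fin m → ℝ),
      (∑ z, ∑ j, ∑ y, ∑ i, g i y j z) = ∑ i, ∑ j, ∑ y, ∑ z, g i y j z := by
    intro g
    calc (∑ z, ∑ j, ∑ y, ∑ i, g i y j z)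
        = ∑ z, ∑ j, ∑ i, ∑ y, g i y j z :=
          Finset.sum_congr rfl fun z _ => Finset.sum_congr rfl fun j _ => Finset.sum_comm
      _ = ∑ z, ∑ i, ∑ j, ∑ y, g i y j z := Finset.sum_congr rfl fun z _ => Finset.sum_comm
      _ = ∑ i, ∑ z, ∑ j, ∑ y, g i y j z := Finset.sum_comm
      _ = ∑ i, ∑ j, ∑ z, ∑ y, g i y j z := Finset.sum_congr rfl fun i _ => Finset.sum_comm
      _ = ∑ i, ∑ j, ∑ y, ∑ z, g i y j z :=
          Finset.sum_congr rfl fun i _ => Finset.sum_congr rfl fun j _ => Finset.sum_comm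
  calc ∑ k, l k ^ 2 = ((Λ * Λ * Λ * Λ).trace).re := h1.symm
    _ = ∑ z, ∑ j, ∑ y, ∑ i, ((C i * D y * C j * D z).trace).re := by
        rw [h2, Complex.re_sum]
        refine Finset.sum_congr rfl fun z _ => ?_
        rw [Complex.re_sum]
        refine Finset.sum_congr rfl fun j _ => ?_
        rw [Complex.re_sum]
        refine Finset.sum_congr rfl fun y _ => ?_
        rw [Complex.re_sum]
    _ ≤ ∑ z, ∑ j, ∑ y, ∑ i, ‖(C i * D y * C j * D z).trace‖ :=
        Finset.sum_le_sum fun z _ => Finset.sum_le_sum fun j _ =>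
          Finset.sum_le_sum fun y _ => Finset.sum_le_sum fun i _ => Complex.re_le_norm _
    _ ≤ ∑ z, ∑ j, ∑ y, ∑ i,
          (Real.sqrt (P i y) * Real.sqrt (P j y)) * (Real.sqrt (P i z) * Real.sqrt (P j z)) :=
        Finset.sum_le_sum fun z _ => Finset.sum_le_sum fun j _ =>
          Finset.sum_le_sum fun y _ => Finset.sum_le_sum fun i _ => key4 i j y z
    _ = ∑ i, ∑ j, ∑ y, ∑ z,
          (Real.sqrt (P i y) * Real.sqrt (P j y)) * (Real.sqrt (P i z) * Real.sqrt (P j z)) :=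
        reorder _
    _ = ∑ i, ∑ j, (∑ y, Real.sqrt (P i y) * Real.sqrt (P j y)) ^ 2 := by
        refine Finset.sum_congr rfl fun i _ => Finset.sum_congr rfl fun j _ => ?_
        rw [sq, Finset.sum_mul_sum]
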